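/- arXiv:1712.00587 — 3 statements merged into one kernel-verified Lean document; each statement's English description precedes it below -/
import Mathlib

section
/- If Y is an infinite-dimensional closed subspace of a Banach space X, T : X → X is a bounded linear operator, and there exist constants λ > 0, D > 0 such that ‖T y‖ ≥ (1/D) e^{λ} ‖y‖ for all y ∈ Y, then T(B_X) cannot be covered by finitely many balls of radius e^{λ}/(4D); in particular ‖T‖_{ic(X)} ≥ e^{λ}/(4D). -/
open Metric

/-- The measure-of-noncompactness norm: infimum of all `r > 0` such that the image of the
closed unit ball can be covered by finitely many balls of radius `r`. -/
noncomputable def icNorm {X : Type*} [NormedAddCommGroup X] [NormedSpace ℝ X]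
    (A : X →L[ℝ] X) : ℝ :=
  sInf {r : ℝ | 0 < r ∧ ∃ s : Finset X, A '' closedBall 0 1 ⊆ ⋃ c ∈ s, closedBall c r}

/-- If `T` expands an infinite-dimensional closed subspace `Y` by a factor `(1/D) e^λ`, then
`T(B_X)` cannot be covered by finitely many balls of radius `e^λ/(4D)`; in particular the
measure-of-noncompactness norm of `T` is at least `e^λ/(4D)`. -/
theorem not_finite_cover_of_expanding {X : Type*} [NormedAddCommGroup X] [NormedSpace ℝ X]
    (Y : Submodule ℝ X) (hYcl : IsClosed (Y : Set X)) (hY : ¬ FiniteDimensional ℝ Y)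
    (T : X →L[ℝ] X) (lam D : ℝ) (hlam : 0 < lam) (hD : 0 < D)
    (hexp : ∀ y ∈ Y, (1 / D) * Real.exp lam * ‖y‖ ≤ ‖T y‖) :
    (¬ ∃ s : Finset X, T '' closedBall 0 1 ⊆ ⋃ c ∈ s, closedBall c (Real.exp lam / (4 * D))) ∧
      Real.exp lam / (4 * D) ≤ icNorm T := by
  have hE := Real.exp_pos lam
  set r : ℝ := Real.exp lam / (4 * D) with hr
  have hrpos : 0 < r := by positivity
  -- Riesz-type sequence in Y
  have habs : ‖(3/2 : ℝ)‖ = 3/2 := by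
    rw [Real.norm_eq_abs, abs_of_pos]; norm_num
  have hc : (1 : ℝ) < ‖(3/2 : ℝ)‖ := by rw [habs]; norm_num
  have hR : ‖(3/2 : ℝ)‖ < (7/4 : ℝ) := by rw [habs]; norm_num
  obtain ⟨f, hf1, hf2⟩ := exists_seq_norm_le_one_le_norm_sub' hc hR hY
  -- scaled sequence in X
  set g : ℕ → X := fun n => (4/7 : ℝ) • (f n : X) with hg
  have hgY : ∀ n, g n ∈ Y := fun n => Y.smul_mem _ (f n).2
  have hgball : ∀ n, g n ∈ closedBall (0 : X) 1 := by
    intro n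
    rw [mem_closedBall_zero_iff, hg, norm_smul, Real.norm_eq_abs,
      abs_of_pos (show (0:ℝ) < 4/7 by norm_num)]
    have := hf1 n
    rw [show ‖f n‖ = ‖(f n : X)‖ from rfl] at this
    nlinarith [norm_nonneg ((f n : X))]
  have hgsep : ∀ m n, m ≠ n → (4/7 : ℝ) ≤ ‖g m - g n‖ := by
    intro m n hmn
    have h1 : (1 : ℝ) ≤ ‖f m - f n‖ := hf2 hmn
    have : g m - g n = (4/7 : ℝ) • ((f m : X) - (f n : X)) := by
      rw [hg]; module
    rw [this, norm_smul, Real.norm_eq_abs,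
      abs_of_pos (show (0:ℝ) < 4/7 by norm_num)]
    have : ‖f m - f n‖ = ‖(f m : X) - (f n : X)‖ := rfl
    rw [this] at h1
    nlinarith
  have key : ∀ m n, m ≠ n → 2 * r < ‖T (g m) - T (g n)‖ := by
    intro m n hmn
    have hmem : g m - g n ∈ Y := Y.sub_mem (hgY m) (hgY n)
    have := hexp _ hmem
    have hT : T (g m) - T (g n) = T (g m - g n) := by rw [map_sub]
    rw [hT]
    have hsep := hgsep m n hmn
    have h2 : (1 / D) * Real.exp lam * (4/7 : ℝ) ≤ ‖T (g m - g n)‖ := by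
      calc (1 / D) * Real.exp lam * (4/7 : ℝ)
          ≤ (1 / D) * Real.exp lam * ‖g m - g n‖ := by
            apply mul_le_mul_of_nonneg_left hsep; positivity
        _ ≤ ‖T (g m - g n)‖ := this
    have : 2 * r < (1 / D) * Real.exp lam * (4/7 : ℝ) := by
      have heq1 : 2 * r = (1 / D) * Real.exp lam * (1/2 : ℝ) := by
        rw [hr]; field_simp; ring
      rw [heq1]
      exact mul_lt_mul_of_pos_left (by norm_num) (by positivity)
    linarith
  have part1 : ¬ ∃ s : Finset X, T '' closedBall 0 1 ⊆ ⋃ c ∈ s, closedBall c r := by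
    rintro ⟨s, hs⟩
    -- each T (g n) lies in some ball
    have hmem : ∀ n, ∃ c ∈ s, T (g n) ∈ closedBall c r := by
      intro n
      have : T (g n) ∈ T '' closedBall 0 1 := ⟨g n, hgball n, rfl⟩
      have := hs this
      simpa using this
    choose c hc1 hc2 using hmem
    obtain ⟨m, n, hmn, heq⟩ := Finite.exists_ne_map_eq_of_infinite
      (fun n => (⟨c n, hc1 n⟩ : s))
    have hcc : c m = c n := congrArg Subtype.val heq
    have h1 := hc2 m
    have h2 := hc2 n
    rw [mem_closedBall, dist_eq_norm] at h1 h2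
    rw [← hcc] at h2
    have : ‖T (g m) - T (g n)‖ ≤ 2 * r := by
      calc ‖T (g m) - T (g n)‖ = ‖(T (g m) - c m) - (T (g n) - c m)‖ := by congr 1; abel
        _ ≤ ‖T (g m) - c m‖ + ‖T (g n) - c m‖ := norm_sub_le _ _
        _ ≤ r + r := add_le_add h1 h2
        _ = 2 * r := by ring
    exact absurd this (not_le.mpr (key m n hmn))
  refine ⟨part1, ?_⟩
  unfold icNorm
  apply le_csInf
  · refine ⟨‖T‖ + 1, by positivity, {0}, ?_⟩
    rintro _ ⟨x, hx, rfl⟩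
    simp only [Finset.mem_singleton, Set.iUnion_iUnion_eq_left, mem_closedBall,
      dist_zero_right]
    calc ‖T x‖ ≤ ‖T‖ * ‖x‖ := T.le_opNorm x
      _ ≤ ‖T‖ * 1 := by
          apply mul_le_mul_of_nonneg_left _ (norm_nonneg T)
          exact mem_closedBall_zero_iff.mp hx
      _ ≤ ‖T‖ + 1 := by linarith
  · rintro b ⟨hb, s, hsb⟩
    by_contra hlt
    push_neg at hlt
    apply part1
    refine ⟨s, hsb.trans ?_⟩
    apply Set.iUnion₂_mono
    intro i _
    exact closedBall_subset_closedBall hlt.le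
end

section
/- Suppose 𝒜 is a uniformly hyperbolic cocycle over a homeomorphism f of a compact space M with projections P(q), constants D, λ > 0, and suppose that for some q ∈ M, limsup_{n→∞} (1/n) log ‖𝒜(q,n)‖_{ic(X)} ≤ 0. Then Ker P(q) is finite-dimensional. -/
open Metric Filter

/-- `𝒜` is a cocycle over `f` with continuous generator. -/
def IsCocycle {M : Type*} [TopologicalSpace M] {X : Type*} [NormedAddCommGroup X]
    [NormedSpace ℝ X] (f : M → M) (𝒜 : M → ℕ → X →L[ℝ] X) : Prop :=
  (∀ q, 𝒜 q 0 = ContinuousLinearMap.id ℝ X) ∧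
  (∀ q n m, 𝒜 q (n + m) = (𝒜 (f^[n] q) m).comp (𝒜 q n)) ∧
  Continuous fun q => 𝒜 q 1

/-- `𝒜` is uniformly hyperbolic over the homeomorphism `f`, with projections `P` and
constants `D`, `lam`.  The backward estimate `‖𝒜(q,-n)(Id - P q)‖ ≤ D e^{-lam n}` is
expressed equivalently as `‖u‖ ≤ D e^{-lam n} ‖𝒜(q,n) u‖` for `u ∈ Ker P q`. -/
def IsUHWith {M : Type*} [TopologicalSpace M] {X : Type*} [NormedAddCommGroup X]
    [NormedSpace ℝ X] (f : M ≃ₜ M) (𝒜 : M → ℕ → X →L[ℝ] X)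
    (P : M → X →L[ℝ] X) (D lam : ℝ) : Prop :=
  0 < D ∧ 0 < lam ∧
  (∀ q, (P q).comp (P q) = P q) ∧
  (∀ q, (𝒜 q 1).comp (P q) = (P (f q)).comp (𝒜 q 1)) ∧
  Continuous P ∧
  (∀ q, Set.BijOn (𝒜 q 1) (LinearMap.ker (P q : X →ₗ[ℝ] X) : Set X) (LinearMap.ker (P (f q) : X →ₗ[ℝ] X) : Set X)) ∧
  (∀ q (n : ℕ), ‖(𝒜 q n).comp (P q)‖ ≤ D * Real.exp (-lam * n)) ∧
  (∀ q (n : ℕ), ∀ u ∈ LinearMap.ker (P q : X →ₗ[ℝ] X), ‖u‖ ≤ D * Real.exp (-lam * n) * ‖𝒜 q n u‖)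

namespace IcNormAux

variable {X : Type*} [NormedAddCommGroup X] [NormedSpace ℝ X]

lemma mem_set (A : X →L[ℝ] X) :
    (‖A‖ + 1) ∈ {r : ℝ | 0 < r ∧ ∃ s : Finset X, A '' closedBall 0 1 ⊆ ⋃ c ∈ s, closedBall c r} := by
  refine ⟨by positivity, {0}, ?_⟩
  rintro x ⟨y, hy, rfl⟩
  rw [mem_closedBall_zero_iff] at hy
  have hball : ‖A y‖ ≤ ‖A‖ + 1 :=
    calc ‖A y‖ ≤ ‖A‖ * ‖y‖ := A.le_opNorm y
    _ ≤ ‖A‖ * 1 := by gcongr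
    _ ≤ ‖A‖ + 1 := by linarith [A.opNorm_nonneg]
  simp only [Set.mem_iUnion, Finset.mem_singleton, exists_prop]
  exact ⟨0, rfl, mem_closedBall_zero_iff.mpr hball⟩

lemma nonempty (A : X →L[ℝ] X) :
    {r : ℝ | 0 < r ∧ ∃ s : Finset X, A '' closedBall 0 1 ⊆ ⋃ c ∈ s, closedBall c r}.Nonempty :=
  ⟨_, mem_set A⟩

lemma icNorm_nonneg (A : X →L[ℝ] X) : 0 ≤ icNorm A :=
  Real.sInf_nonneg fun _ hx => hx.1.le

lemma icNorm_le (A : X →L[ℝ] X) : icNorm A ≤ ‖A‖ + 1 :=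
  csInf_le ⟨0, fun _ hx => hx.1.le⟩ (mem_set A)

lemma exists_cover (A : X →L[ℝ] X) {ε : ℝ} (hε : icNorm A < ε) :
    ∃ r : ℝ, 0 < r ∧ r < ε ∧
      ∃ s : Finset X, A '' closedBall 0 1 ⊆ ⋃ c ∈ s, closedBall c r := by
  obtain ⟨r, hr, hrε⟩ := exists_lt_of_csInf_lt (nonempty A) hε
  exact ⟨r, hr.1, hrε, hr.2⟩

end IcNormAux

/-- If a uniformly hyperbolic cocycle satisfies
`limsup (1/n) log ‖𝒜(q,n)‖_{ic(X)} ≤ 0` at some point `q`, then `Ker P q` is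
finite-dimensional. -/
theorem finiteDimensional_ker_of_limsup_icNorm_nonpos {M : Type*} [TopologicalSpace M]
    [CompactSpace M] {X : Type*} [NormedAddCommGroup X] [NormedSpace ℝ X]
    (f : M ≃ₜ M) (𝒜 : M → ℕ → X →L[ℝ] X) (hcoc : IsCocycle f 𝒜)
    (P : M → X →L[ℝ] X) (D lam : ℝ) (hUH : IsUHWith f 𝒜 P D lam) (q : M)
    (h : limsup (fun n : ℕ => Real.log (icNorm (𝒜 q n)) / n) atTop ≤ 0) :
    FiniteDimensional ℝ (LinearMap.ker (P q : X →ₗ[ℝ] X)) := by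
  obtain ⟨hD, hlam, -, -, -, -, -, hker⟩ := hUH
  obtain ⟨h0, hadd, hcont⟩ := hcoc
  -- uniform bound on the generator via compactness
  obtain ⟨C, hC⟩ : ∃ C : ℝ, ∀ p : M, ‖𝒜 p 1‖ ≤ C := by
    obtain ⟨C, hC⟩ := isCompact_univ.exists_bound_of_continuousOn hcont.continuousOn
    exact ⟨C, fun p => hC p trivial⟩
  set K : ℝ := max C 1 with hKdef
  have hK1 : (1 : ℝ) ≤ K := le_max_right _ _
  have hAn : ∀ n : ℕ, ‖𝒜 q n‖ ≤ K ^ n := by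
    intro n
    induction n with
    | zero => simpa [h0 q] using (ContinuousLinearMap.norm_id_le)
    | succ n ih =>
      have : 𝒜 q (n + 1) = (𝒜 (f^[n] q) 1).comp (𝒜 q n) := hadd q n 1
      rw [this, pow_succ]
      calc ‖(𝒜 (f^[n] q) 1).comp (𝒜 q n)‖ ≤ ‖𝒜 (f^[n] q) 1‖ * ‖𝒜 q n‖ :=
            ContinuousLinearMap.opNorm_comp_le _ _
        _ ≤ K * K ^ n := by
            apply mul_le_mul ((hC _).trans (le_max_left _ _)) ih (norm_nonneg _)
            linarith
        _ = K ^ n * K := by ring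
  -- boundedness of the limsup sequence
  set a : ℕ → ℝ := fun n => Real.log (icNorm (𝒜 q n)) / n with ha
  have hbound : ∀ n, a n ≤ Real.log (2 * K) := by
    intro n
    have hlog2K : 0 ≤ Real.log (2 * K) := Real.log_nonneg (by linarith)
    rcases Nat.eq_zero_or_pos n with rfl | hn
    · simpa [ha] using hlog2K
    · have h2n : (2 : ℝ) * K ^ n ≤ (2 * K) ^ n := by
        rw [mul_pow]
        have h1 : (1:ℝ) ≤ K ^ n := one_le_pow₀ hK1
        have h2 : (2:ℝ) ≤ 2 ^ n := by
          calc (2:ℝ) = 2 ^ 1 := (pow_one 2).symm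
            _ ≤ 2 ^ n := pow_le_pow_right₀ (by norm_num) hn
        nlinarith
      have hic : icNorm (𝒜 q n) ≤ (2 * K) ^ n := by
        calc icNorm (𝒜 q n) ≤ ‖𝒜 q n‖ + 1 := IcNormAux.icNorm_le _
          _ ≤ K ^ n + 1 := by linarith [hAn n]
          _ ≤ 2 * K ^ n := by nlinarith [one_le_pow₀ (n := n) hK1]
          _ ≤ (2 * K) ^ n := h2n
      have hloglog : Real.log (icNorm (𝒜 q n)) ≤ n * Real.log (2 * K) := by
        rcases lt_or_ge 0 (icNorm (𝒜 q n)) with hpos | hle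
        · calc Real.log (icNorm (𝒜 q n)) ≤ Real.log ((2 * K) ^ n) :=
              Real.log_le_log hpos hic
            _ = n * Real.log (2 * K) := by rw [Real.log_pow]
        · have : icNorm (𝒜 q n) = 0 := le_antisymm hle (IcNormAux.icNorm_nonneg _)
          rw [this, Real.log_zero]
          positivity
      rw [ha]
      rw [div_le_iff₀ (by exact_mod_cast hn)]
      calc Real.log (icNorm (𝒜 q n)) ≤ n * Real.log (2 * K) := hloglog
        _ = Real.log (2 * K) * n := by ring
  have hb : IsBoundedUnder (· ≤ ·) atTop a := isBoundedUnder_of ⟨_, hbound⟩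
  have hev : ∀ᶠ n : ℕ in atTop, a n < lam / 4 :=
    eventually_lt_of_limsup_lt (lt_of_le_of_lt h (by positivity)) hb
  -- by contradiction, Riesz sequence
  by_contra hfin
  obtain ⟨R, g, hR, hgle, hgsep⟩ := exists_seq_norm_le_one_le_norm_sub (𝕜 := ℝ)
    (E := ↥(LinearMap.ker (P q : X →ₗ[ℝ] X))) hfin
  have hRpos : (0 : ℝ) < R := by linarith
  -- smallness
  have hsmall : ∀ᶠ n : ℕ in atTop, 2 * R * D * Real.exp (-(3 * lam / 4) * n) < 1 := by
    have h1 : Tendsto (fun n : ℕ => 3 * lam / 4 * n) atTop atTop :=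
      Tendsto.const_mul_atTop (by positivity) tendsto_natCast_atTop_atTop
    have h2 : Tendsto (fun n : ℕ => Real.exp (-(3 * lam / 4) * n)) atTop (nhds 0) := by
      have := Real.tendsto_exp_neg_atTop_nhds_zero.comp h1
      refine this.congr fun n => ?_
      simp only [Function.comp]
      ring_nf
    have h3 : Tendsto (fun n : ℕ => 2 * R * D * Real.exp (-(3 * lam / 4) * n))
        atTop (nhds (2 * R * D * 0)) := h2.const_mul _
    rw [mul_zero] at h3
    exact h3.eventually (eventually_lt_nhds zero_lt_one) |>.mono fun n hn => hn
  obtain ⟨n, hn1, hna, hnsmall⟩ :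
      ∃ n : ℕ, 1 ≤ n ∧ a n < lam / 4 ∧ 2 * R * D * Real.exp (-(3 * lam / 4) * n) < 1 := by
    obtain ⟨n, hn⟩ := ((eventually_ge_atTop 1).and (hev.and hsmall)).exists
    exact ⟨n, hn.1, hn.2.1, hn.2.2⟩
  have hnpos : (0 : ℝ) < n := by exact_mod_cast hn1
  -- get a finite cover of radius r < exp (lam/4 * n)
  have hicn : icNorm (𝒜 q n) < Real.exp (lam / 4 * n) := by
    rcases lt_or_ge 0 (icNorm (𝒜 q n)) with hpos | hle
    · have : Real.log (icNorm (𝒜 q n)) < lam / 4 * n := by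
        have := hna
        rw [ha, div_lt_iff₀ hnpos] at this
        linarith
      exact (Real.log_lt_iff_lt_exp hpos).mp this
    · exact lt_of_le_of_lt hle (Real.exp_pos _)
  obtain ⟨r, hrpos, hrlt, s, hcover⟩ := IcNormAux.exists_cover (𝒜 q n) hicn
  -- map the Riesz sequence into the cover and apply pigeonhole
  set y : ℕ → X := fun i => 𝒜 q n (R⁻¹ • (g i : X)) with hy
  have hmem : ∀ i : ℕ, ∃ c ∈ s, y i ∈ closedBall c r := by
    intro i
    have h1 : R⁻¹ • (g i : X) ∈ closedBall (0 : X) 1 := by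
      rw [mem_closedBall_zero_iff, norm_smul, Real.norm_eq_abs, abs_of_pos (by positivity)]
      rw [inv_mul_le_iff₀ hRpos, mul_one]
      simpa using hgle i
    have := hcover ⟨_, h1, rfl⟩
    simpa only [Set.mem_iUnion, exists_prop] using this
  choose c hcs hcb using hmem
  obtain ⟨i, j, hij, hcij⟩ : ∃ i j : ℕ, i ≠ j ∧ c i = c j := by
    obtain ⟨i, j, hij, hcij⟩ := Finite.exists_ne_map_eq_of_infinite
      (fun i : ℕ => (⟨c i, hcs i⟩ : {x // x ∈ s}))
    exact ⟨i, j, hij, congrArg Subtype.val hcij⟩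
  -- contradiction from expansion on the kernel
  have hyij : ‖y i - y j‖ ≤ 2 * r := by
    have h1 := hcb i
    have h2 := hcb j
    rw [mem_closedBall, dist_eq_norm] at h1 h2
    calc ‖y i - y j‖ = ‖(y i - c i) - (y j - c j)‖ := by rw [hcij]; congr 1; abel
      _ ≤ ‖y i - c i‖ + ‖y j - c j‖ := norm_sub_le _ _
      _ ≤ r + r := add_le_add h1 h2
      _ = 2 * r := by ring
  set u : X := R⁻¹ • ((g i : X) - (g j : X)) with hu
  have humem : u ∈ LinearMap.ker (P q : X →ₗ[ℝ] X) := by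
    apply Submodule.smul_mem
    exact sub_mem (g i).2 (g j).2
  have hAu : 𝒜 q n u = y i - y j := by
    simp only [hu, hy, map_smul, map_sub, smul_sub]
  have hexp := hker q n u humem
  rw [hAu] at hexp
  have hsep : (1 : ℝ) ≤ ‖(g i : X) - (g j : X)‖ := by simpa using hgsep hij
  have hnu : R⁻¹ ≤ ‖u‖ := by
    rw [hu, norm_smul, Real.norm_eq_abs, abs_of_pos (by positivity)]
    nlinarith [inv_pos.mpr hRpos]
  have hkey : R⁻¹ ≤ D * Real.exp (-lam * n) * (2 * r) := by
    calc R⁻¹ ≤ ‖u‖ := hnu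
      _ ≤ D * Real.exp (-lam * n) * ‖y i - y j‖ := hexp
      _ ≤ D * Real.exp (-lam * n) * (2 * r) := by
          apply mul_le_mul_of_nonneg_left hyij
          positivity
  have hexpid : Real.exp (-(3 * lam / 4) * (n : ℝ)) =
      Real.exp (lam / 4 * n) * Real.exp (-lam * n) := by
    rw [← Real.exp_add]; ring_nf
  have hfinal : (1 : ℝ) ≤ 2 * R * D * Real.exp (-(3 * lam / 4) * n) := by
    have h1 : 1 ≤ R * (D * Real.exp (-lam * n) * (2 * r)) := by
      rw [← mul_le_mul_iff_right₀ hRpos] at hkey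
      rwa [mul_inv_cancel₀ hRpos.ne'] at hkey
    have hepos : 0 < Real.exp (-lam * (n : ℝ)) := Real.exp_pos _
    rw [hexpid]
    nlinarith
  linarith
end

section
/- Suppose Σ ⊂ ℝ is a closed set with Σ ⊆ (κ, S] for some κ ∈ [−∞, ∞) and S < ∞, and suppose that for every c ∈ (κ, ∞) \ Σ, the intersection Σ ∩ [c, ∞) is a union of finitely many closed intervals. If Σ is nonempty and is not a finite union of intervals of the forms ⋃_{n=1}^k [a_n,b_n] or ⋃_{n=1}^{k−1}[a_n,b_n] ∪ (κ,b_k], then either Σ = ⋃_{n=1}^∞ [a_n,b_n] with b_1 ≥ a_1 > b_2 ≥ a_2 > ⋯ and lim a_n = κ, or Σ = ⋃_{n=1}^∞ [a_n,b_n] ∪ (κ, b_∞] with b_∞ = lim a_n > κ. -/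
open Filter Set

/-- Structure theorem for the Sacker–Sell spectrum (topological content).  Let `Σ ⊆ (κ, S]`
be a closed set of reals such that to the right of any point `c ∉ Σ` with `c > κ` the set
`Σ ∩ [c, ∞)` is a finite union of closed intervals.  If `Σ` is nonempty and is not a finite
union of the forms `⋃ [aₙ,bₙ]` or `⋃ [aₙ,bₙ] ∪ (κ,c]`, then `Σ` is a countable union
`⋃ₙ [aₙ,bₙ]` of ordered intervals with `aₙ → κ`, or such a union together with a tail
`(κ, b∞]` where `b∞ = lim aₙ > κ`. -/
theorem sacker_sell_structure (Sp : Set ℝ) (κ : EReal) (S : ℝ)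
    (hclosed : IsClosed Sp)
    (hsub : ∀ x ∈ Sp, κ < (x : EReal) ∧ x ≤ S)
    (hfin : ∀ c : ℝ, κ < (c : EReal) → c ∉ Sp →
      ∃ (k : ℕ) (a b : Fin k → ℝ), (∀ i, a i ≤ b i) ∧
        Sp ∩ Ici c = ⋃ i, Icc (a i) (b i))
    (hne : Sp.Nonempty)
    (hnot₂ : ¬ ∃ (k : ℕ) (a b : Fin k → ℝ), (∀ i, a i ≤ b i) ∧
        (∀ i j, i < j → b j < a i) ∧ (∀ i, κ < (a i : EReal)) ∧
        Sp = ⋃ i, Icc (a i) (b i))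
    (hnot₃ : ¬ ∃ (k : ℕ) (a b : Fin k → ℝ) (c : ℝ), (∀ i, a i ≤ b i) ∧
        (∀ i j, i < j → b j < a i) ∧ κ < (c : EReal) ∧ (∀ i, c < a i) ∧
        Sp = (⋃ i, Icc (a i) (b i)) ∪ {x : ℝ | κ < (x : EReal) ∧ x ≤ c}) :
    (∃ a b : ℕ → ℝ, (∀ n, a n ≤ b n) ∧ (∀ n m, n < m → b m < a n) ∧
        Tendsto (fun n => ((a n : ℝ) : EReal)) atTop (nhds κ) ∧
        Sp = ⋃ n, Icc (a n) (b n)) ∨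
      (∃ (a b : ℕ → ℝ) (binf : ℝ), (∀ n, a n ≤ b n) ∧ (∀ n m, n < m → b m < a n) ∧
        Tendsto a atTop (nhds binf) ∧ κ < (binf : EReal) ∧
        Sp = (⋃ n, Icc (a n) (b n)) ∪ {x : ℝ | κ < (x : EReal) ∧ x ≤ binf}) := by
  classical
  have hbddS : BddAbove Sp := ⟨S, fun x hx => (hsub x hx).2⟩
  obtain ⟨A, hA⟩ : ∃ A : ℝ → ℝ, ∀ t, A t = sInf {y : ℝ | Icc y t ⊆ Sp} :=
    ⟨_, fun _ => rfl⟩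
  obtain ⟨g, hg0, hgs⟩ : ∃ g : ℕ → ℝ, g 0 = sSup Sp ∧
      ∀ n, g (n + 1) = sSup (Sp ∩ Iio (A (g n))) :=
    ⟨fun n => Nat.rec (sSup Sp) (fun _ t => sSup (Sp ∩ Iio (A t))) n, rfl, fun _ => rfl⟩
  -- the set whose infimum is `A b`
  have hbmem : ∀ b ∈ Sp, b ∈ {y : ℝ | Icc y b ⊆ Sp} := by
    intro b hb x hx
    have : x = b := le_antisymm hx.2 hx.1
    rwa [this]
  -- component lemma
  have comp : ∀ b ∈ Sp, BddBelow {y : ℝ | Icc y b ⊆ Sp} → A b ≤ b ∧ Icc (A b) b ⊆ Sp := by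
    intro b hb hbdd
    have hle : A b ≤ b := by rw [hA]; exact csInf_le hbdd (hbmem b hb)
    refine ⟨hle, ?_⟩
    have hIoc : Ioc (A b) b ⊆ Sp := by
      intro x hx
      have : ∃ y ∈ {y : ℝ | Icc y b ⊆ Sp}, y < x := by
        apply exists_lt_of_csInf_lt ⟨b, hbmem b hb⟩
        rw [← hA]; exact hx.1
      obtain ⟨y, hy, hyx⟩ := this
      exact hy ⟨le_of_lt hyx, hx.2⟩
    rcases eq_or_lt_of_le hle with he | hl
    · intro x hx
      have : x = b := le_antisymm hx.2 (he ▸ hx.1)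
      rwa [this]
    · intro x hx
      have h1 : closure (Ioc (A b) b) = Icc (A b) b := closure_Ioc (ne_of_lt hl)
      have : x ∈ closure Sp := closure_mono hIoc (h1 ▸ hx)
      rwa [hclosed.closure_eq] at this
  -- unbounded case
  have unb : ∀ b ∈ Sp, ¬ BddBelow {y : ℝ | Icc y b ⊆ Sp} → Iic b ⊆ Sp ∧ κ = ⊥ := by
    intro b hb hnb
    have h1 : Iic b ⊆ Sp := by
      intro x hx
      obtain ⟨y, hy, hyx⟩ := not_bddBelow_iff.mp hnb x
      exact hy ⟨le_of_lt hyx, hx⟩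
    refine ⟨h1, ?_⟩
    by_contra hne'
    have hnt : κ ≠ ⊤ := ne_top_of_lt (hsub b hb).1
    lift κ to ℝ using ⟨hnt, hne'⟩ with r
    have hx : min (r - 1) b ∈ Sp := h1 (mem_Iic.mpr (min_le_right _ _))
    have := (hsub _ hx).1
    rw [EReal.coe_lt_coe_iff] at this
    have : r < r - 1 := lt_of_lt_of_le this (min_le_left _ _)
    linarith
  -- gap lemma
  have gap : ∀ b ∈ Sp, BddBelow {y : ℝ | Icc y b ⊆ Sp} → (Sp ∩ Iio (A b)).Nonempty →
      sSup (Sp ∩ Iio (A b)) ∈ Sp ∧ sSup (Sp ∩ Iio (A b)) < A b := by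
    intro b hb hbdd hne'
    obtain ⟨hleb, hIcc⟩ := comp b hb hbdd
    have hbddab : BddAbove (Sp ∩ Iio (A b)) := ⟨A b, fun x hx => le_of_lt hx.2⟩
    have hmSp : sSup (Sp ∩ Iio (A b)) ∈ Sp := by
      have h1 : sSup (Sp ∩ Iio (A b)) ∈ closure (Sp ∩ Iio (A b)) :=
        csSup_mem_closure hne' hbddab
      have h2 : closure (Sp ∩ Iio (A b)) ⊆ closure Sp := closure_mono inter_subset_left
      have := h2 h1
      rwa [hclosed.closure_eq] at this
    have hmle : sSup (Sp ∩ Iio (A b)) ≤ A b := csSup_le hne' (fun x hx => le_of_lt hx.2)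
    rcases lt_or_eq_of_le hmle with h | h
    · exact ⟨hmSp, h⟩
    exfalso
    have wall : ∀ x, x < A b → ¬ (Ioo x (A b) ⊆ Sp) := by
      intro x hx hIoo
      have hx' : (x + A b) / 2 ∈ {y : ℝ | Icc y b ⊆ Sp} := by
        intro z hz
        rcases lt_or_ge z (A b) with h1 | h1
        · exact hIoo ⟨by linarith [hz.1], h1⟩
        · exact hIcc ⟨h1, hz.2⟩
      have := csInf_le hbdd hx'
      rw [← hA] at this
      linarith
    obtain ⟨x₀, hx₀Sp, hx₀lt⟩ := id hne'
    obtain ⟨c₀, hc₀, hc₀n⟩ : ∃ c, c ∈ Ioo x₀ (A b) ∧ c ∉ Sp := by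
      by_contra hcon
      push_neg at hcon
      exact wall x₀ hx₀lt (fun z hz => hcon z hz)
    have hκc : κ < (c₀ : EReal) :=
      lt_trans (hsub x₀ hx₀Sp).1 (EReal.coe_lt_coe_iff.mpr hc₀.1)
    obtain ⟨k, α, β, hαβ, hrepc⟩ := hfin c₀ hκc hc₀n
    set T := Finset.univ.filter (fun i : Fin k => β i < A b) with hT
    set δ := if hTne : T.Nonempty then T.inf' hTne (fun i => A b - β i) else 1 with hδ
    have hδpos : 0 < δ := by
      rw [hδ]
      split
      · rename_i hTne
        rw [Finset.lt_inf'_iff]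
        intro i hi
        rw [hT, Finset.mem_filter] at hi
        linarith [hi.2]
      · norm_num
    have hδle : ∀ i : Fin k, β i < A b → δ ≤ A b - β i := by
      intro i hi
      have hiT : i ∈ T := by rw [hT, Finset.mem_filter]; exact ⟨Finset.mem_univ _, hi⟩
      rw [hδ]
      rw [dif_pos ⟨i, hiT⟩]
      exact Finset.inf'_le _ hiT
    have hmax : max c₀ (A b - δ) < sSup (Sp ∩ Iio (A b)) := by
      rw [h]
      apply max_lt hc₀.2
      linarith
    obtain ⟨x, hxmem, hxgt⟩ := exists_lt_of_lt_csSup hne' hmax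
    have hxc : x ∈ Sp ∩ Ici c₀ :=
      ⟨hxmem.1, le_of_lt (lt_of_le_of_lt (le_max_left _ _) hxgt)⟩
    rw [hrepc] at hxc
    obtain ⟨i, hi⟩ := mem_iUnion.mp hxc
    have hβ : A b ≤ β i := by
      by_contra hβn
      push_neg at hβn
      have h1 := hδle i hβn
      have h2 : x ≤ β i := hi.2
      have h3 : A b - δ < x := lt_of_le_of_lt (le_max_right _ _) hxgt
      linarith
    have hxset : x ∈ {y : ℝ | Icc y b ⊆ Sp} := by
      intro z hz
      rcases le_or_gt z (A b) with h1 | h1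
      · have hz1 : z ∈ Icc (α i) (β i) := ⟨le_trans hi.1 hz.1, le_trans h1 hβ⟩
        have hz2 : z ∈ Sp ∩ Ici c₀ := by rw [hrepc]; exact mem_iUnion.mpr ⟨i, hz1⟩
        exact hz2.1
      · exact hIcc ⟨le_of_lt h1, hz.2⟩
    have := csInf_le hbdd hxset
    rw [← hA] at this
    have : x < x := lt_of_lt_of_le hxmem.2 this
    exact lt_irrefl _ this
  -- main invariant
  have K : ∀ n : ℕ, g n ∈ Sp ∧ A (g n) ≤ g n ∧ Icc (A (g n)) (g n) ⊆ Sp ∧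
      g (n + 1) ∈ Sp ∧ g (n + 1) < A (g n) ∧
      Sp ∩ Ici (A (g n)) = ⋃ i : Fin (n + 1), Icc (A (g i)) (g i) := by
    intro n
    induction n using Nat.strong_induction_on with
    | _ n ih =>
      have hchain1 : ∀ m, m < n → g (m + 1) < A (g m) := fun m hm => (ih m hm).2.2.2.2.1
      have hchain2 : ∀ m, m < n → A (g m) ≤ g m := fun m hm => (ih m hm).2.1
      have hanti : ∀ i m : ℕ, i ≤ m → m < n → A (g m) ≤ A (g i) := by
        intro i m
        induction m with
        | zero => intro h1 _; rw [Nat.le_zero.mp h1]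
        | succ m ihm =>
          intro h1 h2
          rcases Nat.eq_or_lt_of_le h1 with he | hl
          · rw [he]
          · have him : i ≤ m := Nat.lt_succ_iff.mp hl
            have hmn : m < n := lt_trans (Nat.lt_succ_self m) h2
            calc A (g (m + 1)) ≤ g (m + 1) := hchain2 _ h2
              _ ≤ A (g m) := le_of_lt (hchain1 m hmn)
              _ ≤ A (g i) := ihm him hmn
      have horder : ∀ i j : ℕ, i < j → j ≤ n → g j < A (g i) := by
        intro i j hij hjn
        obtain ⟨m, rfl⟩ : ∃ m, j = m + 1 := ⟨j - 1, by omega⟩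
        have hmn : m < n := by omega
        exact lt_of_lt_of_le (hchain1 m hmn) (hanti i m (by omega) hmn)
      have hgnSp : g n ∈ Sp := by
        cases n with
        | zero => rw [hg0]; exact hclosed.csSup_mem hne hbddS
        | succ m => exact (ih m (Nat.lt_succ_self m)).2.2.2.1
      have hbdd : BddBelow {y : ℝ | Icc y (g n) ⊆ Sp} := by
        by_contra hnb
        obtain ⟨hIic, hκ⟩ := unb (g n) hgnSp hnb
        apply hnot₃
        refine ⟨n, fun i => A (g i), fun i => g i, g n, ?_, ?_, ?_, ?_, ?_⟩
        · exact fun i => hchain2 i i.2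
        · exact fun i j hij => horder i j hij (le_of_lt j.2)
        · rw [hκ]; exact EReal.bot_lt_coe _
        · exact fun i => horder i n i.2 (le_refl n)
        · have htail : {x : ℝ | κ < (x : EReal) ∧ x ≤ g n} = Iic (g n) := by
            ext x; simp [hκ]
          rw [htail]
          ext x
          constructor
          · intro hx
            rcases le_or_gt x (g n) with h1 | h1
            · exact Or.inr h1
            · left
              cases n with
              | zero =>
                exfalso
                have : x ≤ g 0 := by rw [hg0]; exact le_csSup hbddS hx
                exact absurd h1 (not_lt.mpr this)
              | succ m =>
                have hxm : A (g m) ≤ x := by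
                  by_contra hc
                  push_neg at hc
                  have : x ≤ g (m + 1) := by
                    rw [hgs m]
                    exact le_csSup ⟨A (g m), fun z hz => le_of_lt hz.2⟩ ⟨hx, hc⟩
                  exact absurd h1 (not_lt.mpr this)
                have := (ih m (Nat.lt_succ_self m)).2.2.2.2.2
                have hxU : x ∈ ⋃ i : Fin (m + 1), Icc (A (g i)) (g i) := by
                  rw [← this]; exact ⟨hx, hxm⟩
                obtain ⟨i, hi⟩ := mem_iUnion.mp hxU
                exact mem_iUnion.mpr ⟨i, hi⟩
          · rintro (hx | hx)
            · obtain ⟨i, hi⟩ := mem_iUnion.mp hx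
              exact (ih i i.2).2.2.1 hi
            · exact hIic hx
      obtain ⟨hleb, hIccn⟩ := comp (g n) hgnSp hbdd
      have hrepn : Sp ∩ Ici (A (g n)) = ⋃ i : Fin (n + 1), Icc (A (g i)) (g i) := by
        ext x
        constructor
        · rintro ⟨hxSp, hxge⟩
          cases n with
          | zero =>
            have hx2 : x ≤ g 0 := by rw [hg0]; exact le_csSup hbddS hxSp
            exact mem_iUnion.mpr ⟨0, hxge, hx2⟩
          | succ m =>
            rcases lt_or_ge x (A (g m)) with h1 | h1
            · have hx2 : x ≤ g (m + 1) := by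
                rw [hgs m]
                exact le_csSup ⟨A (g m), fun z hz => le_of_lt hz.2⟩ ⟨hxSp, h1⟩
              exact mem_iUnion.mpr ⟨⟨m + 1, Nat.lt_succ_self _⟩, hxge, hx2⟩
            · have := (ih m (Nat.lt_succ_self m)).2.2.2.2.2
              have hxU : x ∈ ⋃ i : Fin (m + 1), Icc (A (g i)) (g i) := by
                rw [← this]; exact ⟨hxSp, h1⟩
              obtain ⟨i, hi⟩ := mem_iUnion.mp hxU
              exact mem_iUnion.mpr ⟨⟨i, Nat.lt_succ_of_lt i.2⟩, hi⟩
        · intro hx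
          obtain ⟨i, hi⟩ := mem_iUnion.mp hx
          have hiSp : x ∈ Sp := by
            rcases Nat.lt_succ_iff_lt_or_eq.mp i.2 with h1 | h1
            · exact (ih i h1).2.2.1 hi
            · rw [h1] at hi; exact hIccn hi
          have hge : A (g n) ≤ x := by
            rcases Nat.lt_succ_iff_lt_or_eq.mp i.2 with h1 | h1
            · exact le_trans (le_of_lt (lt_of_le_of_lt hleb (horder i n h1 (le_refl n)))) hi.1
            · rw [h1] at hi; exact hi.1
          exact ⟨hiSp, hge⟩
      by_cases hne2 : (Sp ∩ Iio (A (g n))).Nonempty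
      · obtain ⟨h1, h2⟩ := gap (g n) hgnSp hbdd hne2
        rw [← hgs n] at h1 h2
        exact ⟨hgnSp, hleb, hIccn, h1, h2, hrepn⟩
      · exfalso
        apply hnot₂
        refine ⟨n + 1, fun i => A (g i), fun i => g i, ?_, ?_, ?_, ?_⟩
        · intro i
          show A (g (i : ℕ)) ≤ g (i : ℕ)
          rcases Nat.lt_succ_iff_lt_or_eq.mp i.2 with h1 | h1
          · exact hchain2 i h1
          · rw [h1]; exact hleb
        · intro i j hij
          exact horder i j hij (Nat.lt_succ_iff.mp j.2)
        · intro i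
          have hmem : A (g i) ∈ Sp := by
            rcases Nat.lt_succ_iff_lt_or_eq.mp i.2 with h1 | h1
            · exact (ih i h1).2.2.1 ⟨le_refl _, hchain2 i h1⟩
            · rw [h1]; exact hIccn ⟨le_refl _, hleb⟩
          exact (hsub _ hmem).1
        · rw [← hrepn]
          ext x
          constructor
          · intro hx
            refine ⟨hx, ?_⟩
            by_contra hc
            simp only [mem_Ici, not_le] at hc
            exact hne2 ⟨x, hx, hc⟩
          · exact fun hx => hx.1
  -- global consequences
  have hleK : ∀ n, A (g n) ≤ g n := fun n => (K n).2.1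
  have hIccK : ∀ n, Icc (A (g n)) (g n) ⊆ Sp := fun n => (K n).2.2.1
  have hstepK : ∀ n, g (n + 1) < A (g n) := fun n => (K n).2.2.2.2.1
  have hrepK : ∀ n, Sp ∩ Ici (A (g n)) = ⋃ i : Fin (n + 1), Icc (A (g i)) (g i) :=
    fun n => (K n).2.2.2.2.2
  have hmemA : ∀ n, A (g n) ∈ Sp := fun n => hIccK n ⟨le_refl _, hleK n⟩
  have hantiA : Antitone (fun n => A (g n)) :=
    antitone_nat_of_succ_le (fun n => le_of_lt (lt_of_le_of_lt (hleK (n + 1)) (hstepK n)))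
  have horderK : ∀ i j : ℕ, i < j → g j < A (g i) := by
    intro i j hij
    obtain ⟨m, rfl⟩ : ∃ m, j = m + 1 := ⟨j - 1, by omega⟩
    exact lt_of_lt_of_le (hstepK m) (hantiA (by omega : i ≤ m))
  have hstrictA : ∀ i j : ℕ, i < j → A (g j) < A (g i) :=
    fun i j hij => lt_of_le_of_lt (hleK j) (horderK i j hij)
  have hgap_pt : ∀ n : ℕ, ∀ w, g (n + 1) < w → w < A (g n) → w ∉ Sp := by
    intro n w h1 h2 hw
    have : w ≤ g (n + 1) := by
      rw [hgs n]
      exact le_csSup ⟨A (g n), fun z hz => le_of_lt hz.2⟩ ⟨hw, h2⟩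
    linarith
  -- pigeonhole
  have pig : ∀ c : ℝ, κ < (c : EReal) → c ∉ Sp → (∀ n, c < A (g n)) → False := by
    intro c hκc hcn hclt
    obtain ⟨k, α, β, hαβ, hrepc⟩ := hfin c hκc hcn
    have hex : ∀ n : ℕ, ∃ i : Fin k, A (g n) ∈ Icc (α i) (β i) := by
      intro n
      have hx : A (g n) ∈ Sp ∩ Ici c := ⟨hmemA n, le_of_lt (hclt n)⟩
      rw [hrepc] at hx
      exact mem_iUnion.mp hx
    choose F hF using hex
    obtain ⟨n, m, hnm, hFeq⟩ :=
      Fintype.exists_ne_map_eq_of_card_lt (fun n : Fin (k + 1) => F n)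
        (by simp)
    have key : ∀ n m : Fin (k + 1), (n : ℕ) < (m : ℕ) → F (n : ℕ) = F (m : ℕ) → False := by
      intro n m hlt hFeq
      set w := (g ((n : ℕ) + 1) + A (g n)) / 2 with hw
      have hw1 : g ((n : ℕ) + 1) < w := by
        have := hstepK (n : ℕ); rw [hw]; linarith
      have hw2 : w < A (g n) := by
        have := hstepK (n : ℕ); rw [hw]; linarith
      have hwn : w ∉ Sp := hgap_pt n w hw1 hw2
      have h3 : α (F (n : ℕ)) ≤ w := by
        have h4 : α (F (m : ℕ)) ≤ A (g m) := (hF (m : ℕ)).1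
        have h5 : A (g (m : ℕ)) ≤ A (g ((n : ℕ) + 1)) := hantiA hlt
        have h6 : A (g ((n : ℕ) + 1)) ≤ g ((n : ℕ) + 1) := hleK _
        rw [hFeq]
        linarith
      have h4 : w ≤ β (F (n : ℕ)) := le_of_lt (lt_of_lt_of_le hw2 (hF (n : ℕ)).2)
      have : w ∈ Sp ∩ Ici c := by
        rw [hrepc]; exact mem_iUnion.mpr ⟨F (n : ℕ), h3, h4⟩
      exact hwn this.1
    rcases lt_trichotomy (n : ℕ) (m : ℕ) with h | h | h
    · exact key n m h hFeq
    · exact hnm (Fin.ext h)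
    · exact key m n h hFeq.symm
  -- final case analysis
  by_cases hbb : BddBelow (Set.range fun n => A (g n))
  · -- bounded below: limit p
    have htendp : Tendsto (fun n => A (g n)) atTop (nhds (⨅ n, A (g n))) :=
      tendsto_atTop_ciInf hantiA hbb
    set p := ⨅ n, A (g n) with hp
    have hplt : ∀ n, p < A (g n) := by
      intro n
      exact lt_of_le_of_lt (ciInf_le hbb (n + 1)) (hstrictA n (n + 1) (Nat.lt_succ_self n))
    have hcov : ∀ x ∈ Sp, p < x → x ∈ ⋃ n : ℕ, Icc (A (g n)) (g n) := by
      intro x hx hpx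
      obtain ⟨n, hn⟩ := exists_lt_of_ciInf_lt (hp ▸ hpx)
      have hxU : x ∈ ⋃ i : Fin (n + 1), Icc (A (g i)) (g i) := by
        rw [← hrepK n]; exact ⟨hx, le_of_lt hn⟩
      obtain ⟨i, hi⟩ := mem_iUnion.mp hxU
      exact mem_iUnion.mpr ⟨i, hi⟩
    have hUsub : (⋃ n : ℕ, Icc (A (g n)) (g n)) ⊆ Sp := by
      intro x hx
      obtain ⟨n, hn⟩ := mem_iUnion.mp hx
      exact hIccK n hn
    by_cases hκp : κ < (p : EReal)
    · right
      refine ⟨fun n => A (g n), g, p, hleK, fun n m hnm => horderK n m hnm, htendp, hκp, ?_⟩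
      have htail : ∀ x : ℝ, κ < (x : EReal) → x ≤ p → x ∈ Sp := by
        intro x h1 h2
        by_contra hxn
        exact pig x h1 hxn (fun n => lt_of_le_of_lt h2 (hplt n))
      ext x
      constructor
      · intro hx
        rcases le_or_gt x p with h1 | h1
        · exact Or.inr ⟨(hsub x hx).1, h1⟩
        · exact Or.inl (hcov x hx h1)
      · rintro (hx | hx)
        · exact hUsub hx
        · exact htail x hx.1 hx.2
    · left
      push_neg at hκp
      have hκle : κ ≤ (p : EReal) := by
        have h1 : Tendsto (fun n => ((A (g n) : ℝ) : EReal)) atTop (nhds (p : EReal)) :=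
          EReal.tendsto_coe.mpr htendp
        exact ge_of_tendsto' h1 (fun n => le_of_lt (hsub _ (hmemA n)).1)
      have hκp' : κ = (p : EReal) := le_antisymm hκle hκp
      refine ⟨fun n => A (g n), g, hleK, fun n m hnm => horderK n m hnm, ?_, ?_⟩
      · rw [hκp']
        exact EReal.tendsto_coe.mpr htendp
      · ext x
        constructor
        · intro hx
          have hpx : p < x := by
            have := (hsub x hx).1
            rw [hκp', EReal.coe_lt_coe_iff] at this
            exact this
          exact hcov x hx hpx
        · intro hx
          obtain ⟨n, hn⟩ := mem_iUnion.mp hx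
          exact hIccK n hn
  · -- unbounded below
    left
    have hexlt : ∀ x : ℝ, ∃ n : ℕ, A (g n) < x := by
      intro x
      obtain ⟨y, hy, hyx⟩ := not_bddBelow_iff.mp hbb x
      obtain ⟨n, rfl⟩ := hy
      exact ⟨n, hyx⟩
    have hκbot : κ = ⊥ := by
      by_contra hne'
      have hnt : κ ≠ ⊤ := ne_top_of_lt (hsub _ (hmemA 0)).1
      lift κ to ℝ using ⟨hnt, hne'⟩ with r
      obtain ⟨n, hn⟩ := hexlt r
      have := (hsub _ (hmemA n)).1
      rw [EReal.coe_lt_coe_iff] at this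
      linarith
    refine ⟨fun n => A (g n), g, hleK, fun n m hnm => horderK n m hnm, ?_, ?_⟩
    · rw [hκbot]
      rw [EReal.tendsto_nhds_bot_iff_real]
      intro x
      obtain ⟨n₀, hn₀⟩ := hexlt x
      filter_upwards [eventually_ge_atTop n₀] with n hn
      exact EReal.coe_lt_coe_iff.mpr (lt_of_le_of_lt (hantiA hn) hn₀)
    · ext x
      constructor
      · intro hx
        obtain ⟨n, hn⟩ := hexlt x
        have hxU : x ∈ ⋃ i : Fin (n + 1), Icc (A (g i)) (g i) := by
          rw [← hrepK n]; exact ⟨hx, le_of_lt hn⟩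
        obtain ⟨i, hi⟩ := mem_iUnion.mp hxU
        exact mem_iUnion.mpr ⟨(i : ℕ), hi⟩
      · intro hx
        obtain ⟨n, hn⟩ := mem_iUnion.mp hx
        exact hIccK n hn
end
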